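/- arXiv:1503.02582 — 3 statements merged into one kernel-verified Lean document; each statement's English description precedes it below -/
import Mathlib

section
/- (Besicovitch) Let E ⊆ ℂ be a compact set with finite one-dimensional Hausdorff measure, H¹(E) < ∞. Then E is A-removable. -/
set_option maxHeartbeats 1000000

open MeasureTheory Filter

/-- A compact set `E ⊆ ℂ` is `A`-removable if every continuous function `f : ℂ → ℂ` that is
holomorphic on `ℂ \ E` and has a finite limit at infinity is constant. -/
def ARemovable (E : Set ℂ) : Prop :=
  ∀ f : ℂ → ℂ, Continuous f → DifferentiableOn ℂ f Eᶜ →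
    (∃ L : ℂ, Tendsto f (cocompact ℂ) (nhds L)) → ∀ z w : ℂ, f z = f w

section BesicovitchAux

open Set intervalIntegral Metric
open scoped ENNReal NNReal
open Complex

noncomputable def RI (f : ℂ → ℂ) (a b c d : ℝ) : ℂ :=
  ((∫ x : ℝ in a..b, f (x + c * I)) - (∫ x : ℝ in a..b, f (x + d * I))) +
  (I * (∫ y : ℝ in c..d, f (b + y * I)) - I * ∫ y : ℝ in c..d, f (a + y * I))

lemma contH (f : ℂ → ℂ) (hf : Continuous f) (c : ℝ) :
    Continuous fun x : ℝ => f (x + c * I) := by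
  apply hf.comp; continuity

lemma contV (f : ℂ → ℂ) (hf : Continuous f) (b : ℝ) :
    Continuous fun y : ℝ => f (b + y * I) := by
  apply hf.comp; continuity

lemma RI_eq_zero {f : ℂ → ℂ} {a b c d : ℝ} (hab : a ≤ b) (hcd : c ≤ d)
    (hf : Continuous f)
    (Hd : DifferentiableOn ℂ f (Set.Ioo a b ×ℂ Set.Ioo c d)) :
    RI f a b c d = 0 := by
  have := Complex.integral_boundary_rect_eq_zero_of_continuousOn_of_differentiableOn f
    (⟨a, c⟩ : ℂ) (⟨b, d⟩ : ℂ) (hf.continuousOn) ?_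
  · rw [RI]
    simp only [smul_eq_mul] at this
    -- `this` has shape (A - B + I*C) - I*D = 0
    linear_combination this
  · simpa [min_eq_left hab, min_eq_left hcd, max_eq_right hab, max_eq_right hcd] using Hd

lemma RI_splitH (f : ℂ → ℂ) (hf : Continuous f) (a m b c d : ℝ) :
    RI f a b c d = RI f a m c d + RI f m b c d := by
  have key : ∀ c' : ℝ, (∫ x : ℝ in a..b, f (x + c' * I)) =
      (∫ x : ℝ in a..m, f (x + c' * I)) + ∫ x : ℝ in m..b, f (x + c' * I) := fun c' =>
    (integral_add_adjacent_intervals ((contH f hf c').intervalIntegrable _ _)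
      ((contH f hf c').intervalIntegrable _ _)).symm
  rw [RI, RI, RI, key c, key d]; ring

lemma RI_splitV (f : ℂ → ℂ) (hf : Continuous f) (a b c p d : ℝ) :
    RI f a b c d = RI f a b c p + RI f a b p d := by
  have key : ∀ b' : ℝ, (∫ y : ℝ in c..d, f (b' + y * I)) =
      (∫ y : ℝ in c..p, f (b' + y * I)) + ∫ y : ℝ in p..d, f (b' + y * I) := fun b' =>
    (integral_add_adjacent_intervals ((contV f hf b').intervalIntegrable _ _)
      ((contV f hf b').intervalIntegrable _ _)).symm
  rw [RI, RI, RI, key a, key b]; ring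

lemma RI_quad (f : ℂ → ℂ) (hf : Continuous f) (a b c d : ℝ) :
    RI f a b c d = RI f a ((a+b)/2) c ((c+d)/2) + RI f ((a+b)/2) b c ((c+d)/2)
      + RI f a ((a+b)/2) ((c+d)/2) d + RI f ((a+b)/2) b ((c+d)/2) d := by
  rw [RI_splitV f hf a b c ((c+d)/2) d, RI_splitH f hf a ((a+b)/2) b c ((c+d)/2),
    RI_splitH f hf a ((a+b)/2) b ((c+d)/2) d]; ring

lemma RI_swapH (f : ℂ → ℂ) (a b c d : ℝ) : RI f b a c d = - RI f a b c d := by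
  rw [RI, RI, intervalIntegral.integral_symm a b, intervalIntegral.integral_symm a b]; ring

lemma RI_swapV (f : ℂ → ℂ) (a b c d : ℝ) : RI f a b d c = - RI f a b c d := by
  rw [RI, RI, intervalIntegral.integral_symm c d, intervalIntegral.integral_symm c d]; ring

lemma RI_degH (f : ℂ → ℂ) (a c d : ℝ) : RI f a a c d = 0 := by
  rw [RI]
  simp [intervalIntegral.integral_same]

lemma RI_degV (f : ℂ → ℂ) (a b c : ℝ) : RI f a b c c = 0 := by
  rw [RI]
  simp [intervalIntegral.integral_same]




lemma RI_bound {f : ℂ → ℂ} (hf : Continuous f) {a b c d : ℝ} (hab : a ≤ b) (hcd : c ≤ d)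
    (K : ℂ) {C : ℝ} (hC : 0 ≤ C)
    (h : ∀ z ∈ Set.Icc a b ×ℂ Set.Icc c d, ‖f z - K‖ ≤ C) :
    ‖RI f a b c d‖ ≤ 2 * ((b - a) + (d - c)) * C := by
  have hRIK : RI f a b c d = RI (fun z => f z - K) a b c d := by
    rw [RI, RI]
    have h1 : ∀ c' : ℝ, (∫ x : ℝ in a..b, (f (x + c' * I) - K)) =
        (∫ x : ℝ in a..b, f (x + c' * I)) - (b - a) • K := fun c' => by
      rw [intervalIntegral.integral_sub ((contH f hf c').intervalIntegrable _ _)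
        (intervalIntegrable_const), intervalIntegral.integral_const]
    have h2 : ∀ b' : ℝ, (∫ y : ℝ in c..d, (f (b' + y * I) - K)) =
        (∫ y : ℝ in c..d, f (b' + y * I)) - (d - c) • K := fun b' => by
      rw [intervalIntegral.integral_sub ((contV f hf b').intervalIntegrable _ _)
        (intervalIntegrable_const), intervalIntegral.integral_const]
    rw [h1 c, h1 d, h2 a, h2 b]; push_cast; ring
  have memH : ∀ c' ∈ Set.Icc c d, ∀ x ∈ Set.uIoc a b, ‖f (↑x + ↑c' * I) - K‖ ≤ C := by
    intro c' hc' x hx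
    rw [Set.uIoc_of_le hab] at hx
    refine h _ ⟨?_, ?_⟩
    · simpa using ⟨hx.1.le, hx.2⟩
    · simpa using hc'
  have memV : ∀ b' ∈ Set.Icc a b, ∀ y ∈ Set.uIoc c d, ‖f (↑b' + ↑y * I) - K‖ ≤ C := by
    intro b' hb' y hy
    rw [Set.uIoc_of_le hcd] at hy
    refine h _ ⟨?_, ?_⟩
    · simpa using hb'
    · simpa using ⟨hy.1.le, hy.2⟩
  rw [hRIK, RI]
  have n1 : ‖∫ x : ℝ in a..b, (f (↑x + ↑c * I) - K)‖ ≤ C * |b - a| :=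
    intervalIntegral.norm_integral_le_of_norm_le_const (memH c ⟨le_refl c, hcd⟩)
  have n2 : ‖∫ x : ℝ in a..b, (f (↑x + ↑d * I) - K)‖ ≤ C * |b - a| :=
    intervalIntegral.norm_integral_le_of_norm_le_const (memH d ⟨hcd, le_refl d⟩)
  have n3 : ‖∫ y : ℝ in c..d, (f (↑b + ↑y * I) - K)‖ ≤ C * |d - c| :=
    intervalIntegral.norm_integral_le_of_norm_le_const (memV b ⟨hab, le_refl b⟩)
  have n4 : ‖∫ y : ℝ in c..d, (f (↑a + ↑y * I) - K)‖ ≤ C * |d - c| :=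
    intervalIntegral.norm_integral_le_of_norm_le_const (memV a ⟨le_refl a, hab⟩)
  rw [_root_.abs_of_nonneg (by linarith : (0:ℝ) ≤ b - a)] at n1 n2
  rw [_root_.abs_of_nonneg (by linarith : (0:ℝ) ≤ d - c)] at n3 n4
  calc ‖((∫ x : ℝ in a..b, (f (↑x + ↑c * I) - K)) - (∫ x : ℝ in a..b, (f (↑x + ↑d * I) - K))) +
      ((I * ∫ y : ℝ in c..d, (f (↑b + ↑y * I) - K)) - I * ∫ y : ℝ in c..d, (f (↑a + ↑y * I) - K))‖
      ≤ ‖(∫ x : ℝ in a..b, (f (↑x + ↑c * I) - K)) - (∫ x : ℝ in a..b, (f (↑x + ↑d * I) - K))‖ +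
        ‖(I * ∫ y : ℝ in c..d, (f (↑b + ↑y * I) - K)) - I * ∫ y : ℝ in c..d, (f (↑a + ↑y * I) - K)‖ :=
        norm_add_le _ _
    _ ≤ (‖∫ x : ℝ in a..b, (f (↑x + ↑c * I) - K)‖ + ‖∫ x : ℝ in a..b, (f (↑x + ↑d * I) - K)‖) +
        (‖I * ∫ y : ℝ in c..d, (f (↑b + ↑y * I) - K)‖ + ‖I * ∫ y : ℝ in c..d, (f (↑a + ↑y * I) - K)‖) := by
        gcongr <;> exact norm_sub_le _ _
    _ ≤ 2 * ((b - a) + (d - c)) * C := by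
        rw [norm_mul, norm_mul, Complex.norm_I, one_mul, one_mul]
        nlinarith [n1, n2, n3, n4]

lemma reProdIm_measurableSet {s t : Set ℝ} (hs : MeasurableSet s) (ht : MeasurableSet t) :
    MeasurableSet (s ×ℂ t) :=
  (hs.preimage Complex.measurable_re).inter (ht.preimage Complex.measurable_im)

lemma volume_reProdIm_Ioc (a b c d : ℝ) :
    volume (Set.Ioc a b ×ℂ Set.Ioc c d) = ENNReal.ofReal (b - a) * ENNReal.ofReal (d - c) := by
  have h : (Set.Ioc a b ×ℂ Set.Ioc c d) =
      Complex.measurableEquivRealProd ⁻¹' (Set.Ioc a b ×ˢ Set.Ioc c d) := by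
    ext z
    simp [Complex.mem_reProdIm, Complex.measurableEquivRealProd_apply, Set.mem_prod]
  rw [h, Complex.volume_preserving_equiv_real_prod.measure_preimage
    ((measurableSet_Ioc.prod measurableSet_Ioc).nullMeasurableSet)]
  rw [show (volume : Measure (ℝ × ℝ)) = (volume : Measure ℝ).prod volume from rfl]
  rw [Measure.prod_prod, Real.volume_Ioc, Real.volume_Ioc]

lemma reProdIm_union_left (s₁ s₂ t : Set ℝ) : ((s₁ ∪ s₂) ×ℂ t) = s₁ ×ℂ t ∪ s₂ ×ℂ t := by
  ext z; simp [Complex.mem_reProdIm]; tauto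

lemma reProdIm_union_right (s t₁ t₂ : Set ℝ) : (s ×ℂ (t₁ ∪ t₂)) = s ×ℂ t₁ ∪ s ×ℂ t₂ := by
  ext z; simp [Complex.mem_reProdIm]; tauto

lemma reProdIm_disjoint_left {s₁ s₂ : Set ℝ} (t : Set ℝ) (h : Disjoint s₁ s₂) :
    Disjoint (s₁ ×ℂ t) (s₂ ×ℂ t) := by
  rw [Set.disjoint_left] at h ⊢
  intro z h1 h2
  rw [Complex.mem_reProdIm] at h1 h2
  exact h h1.1 h2.1

lemma reProdIm_disjoint_right (s : Set ℝ) {t₁ t₂ : Set ℝ} (h : Disjoint t₁ t₂) :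
    Disjoint (s ×ℂ t₁) (s ×ℂ t₂) := by
  rw [Set.disjoint_left] at h ⊢
  intro z h1 h2
  rw [Complex.mem_reProdIm] at h1 h2
  exact h h1.2 h2.2

noncomputable def nu (J : Finset ℕ) (cc : ℕ → ℂ) (r : ℕ → ℝ) (a b c d : ℝ) : ℝ :=
  ∑ j ∈ J, (volume ((Set.Ioc a b ×ℂ Set.Ioc c d) ∩ Metric.ball (cc j) (2 * r j))).toReal / r j

lemma nu_nonneg (J : Finset ℕ) (cc : ℕ → ℂ) (r : ℕ → ℝ) (hr : ∀ j ∈ J, 0 < r j)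
    (a b c d : ℝ) : 0 ≤ nu J cc r a b c d := by
  refine Finset.sum_nonneg fun j hj => div_nonneg ENNReal.toReal_nonneg (hr j hj).le

lemma vol_inter_add (A B C : Set ℂ) (hA : MeasurableSet A) (hB : MeasurableSet B)
    (hd : Disjoint A B) (hfin : volume C ≠ ⊤) (hC : MeasurableSet C) :
    (volume ((A ∪ B) ∩ C)).toReal = (volume (A ∩ C)).toReal + (volume (B ∩ C)).toReal := by
  rw [Set.union_inter_distrib_right, measure_union (hd.mono Set.inter_subset_left
    Set.inter_subset_left) (hB.inter hC), ENNReal.toReal_add]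
  · exact ne_top_of_le_ne_top hfin (measure_mono Set.inter_subset_right)
  · exact ne_top_of_le_ne_top hfin (measure_mono Set.inter_subset_right)

lemma nu_splitH (J : Finset ℕ) (cc : ℕ → ℂ) (r : ℕ → ℝ) {a m b : ℝ} (c d : ℝ)
    (h1 : a ≤ m) (h2 : m ≤ b) :
    nu J cc r a b c d = nu J cc r a m c d + nu J cc r m b c d := by
  rw [nu, nu, nu, ← Finset.sum_add_distrib]
  refine Finset.sum_congr rfl fun j _ => ?_
  rw [← add_div]
  congr 1
  rw [← Set.Ioc_union_Ioc_eq_Ioc h1 h2, reProdIm_union_left]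
  exact vol_inter_add _ _ _
    (reProdIm_measurableSet measurableSet_Ioc measurableSet_Ioc)
    (reProdIm_measurableSet measurableSet_Ioc measurableSet_Ioc)
    (reProdIm_disjoint_left _ (Set.Ioc_disjoint_Ioc_of_le le_rfl))
    (measure_ball_lt_top).ne measurableSet_ball

lemma nu_splitV (J : Finset ℕ) (cc : ℕ → ℂ) (r : ℕ → ℝ) (a b : ℝ) {c p d : ℝ}
    (h1 : c ≤ p) (h2 : p ≤ d) :
    nu J cc r a b c d = nu J cc r a b c p + nu J cc r a b p d := by
  rw [nu, nu, nu, ← Finset.sum_add_distrib]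
  refine Finset.sum_congr rfl fun j _ => ?_
  rw [← add_div]
  congr 1
  rw [← Set.Ioc_union_Ioc_eq_Ioc h1 h2, reProdIm_union_right]
  exact vol_inter_add _ _ _
    (reProdIm_measurableSet measurableSet_Ioc measurableSet_Ioc)
    (reProdIm_measurableSet measurableSet_Ioc measurableSet_Ioc)
    (reProdIm_disjoint_right _ (Set.Ioc_disjoint_Ioc_of_le le_rfl))
    (measure_ball_lt_top).ne measurableSet_ball

lemma nu_quad (J : Finset ℕ) (cc : ℕ → ℂ) (r : ℕ → ℝ) {a b c d : ℝ}
    (hab : a ≤ b) (hcd : c ≤ d) :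
    nu J cc r a b c d = nu J cc r a ((a+b)/2) c ((c+d)/2) + nu J cc r ((a+b)/2) b c ((c+d)/2)
      + nu J cc r a ((a+b)/2) ((c+d)/2) d + nu J cc r ((a+b)/2) b ((c+d)/2) d := by
  rw [nu_splitV J cc r a b (by linarith : c ≤ (c+d)/2) (by linarith : (c+d)/2 ≤ d),
    nu_splitH J cc r c ((c+d)/2) (by linarith : a ≤ (a+b)/2) (by linarith : (a+b)/2 ≤ b),
    nu_splitH J cc r ((c+d)/2) d (by linarith : a ≤ (a+b)/2) (by linarith : (a+b)/2 ≤ b)]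
  ring

lemma nu_lower {J : Finset ℕ} {cc : ℕ → ℂ} {r : ℕ → ℝ} (hr : ∀ j ∈ J, 0 < r j)
    {a b c d : ℝ} (hab : a ≤ b) (hcd : c ≤ d) {j : ℕ} (hj : j ∈ J)
    (hsub : (Set.Ioc a b ×ℂ Set.Ioc c d) ⊆ Metric.ball (cc j) (2 * r j)) :
    (b - a) * (d - c) / r j ≤ nu J cc r a b c d := by
  have key : (volume ((Set.Ioc a b ×ℂ Set.Ioc c d) ∩ Metric.ball (cc j) (2 * r j))).toReal
      = (b - a) * (d - c) := by
    rw [Set.inter_eq_left.mpr hsub, volume_reProdIm_Ioc, ENNReal.toReal_mul,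
      ENNReal.toReal_ofReal (by linarith), ENNReal.toReal_ofReal (by linarith)]
  calc (b - a) * (d - c) / r j
      = (volume ((Set.Ioc a b ×ℂ Set.Ioc c d) ∩ Metric.ball (cc j) (2 * r j))).toReal / r j := by
        rw [key]
    _ ≤ nu J cc r a b c d :=
        Finset.single_le_sum (f := fun i => (volume ((Set.Ioc a b ×ℂ Set.Ioc c d) ∩
            Metric.ball (cc i) (2 * r i))).toReal / r i)
          (fun i hi => div_nonneg ENNReal.toReal_nonneg (hr i hi).le) hj

lemma nu_upper {J : Finset ℕ} {cc : ℕ → ℂ} {r : ℕ → ℝ} (hr : ∀ j ∈ J, 0 < r j)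
    (a b c d : ℝ) : nu J cc r a b c d ≤ ∑ j ∈ J, 16 * r j := by
  refine Finset.sum_le_sum fun j hj => ?_
  have hrj := hr j hj
  have h1 : Metric.ball (cc j) (2 * r j) ⊆
      Set.Ioc ((cc j).re - 2 * r j) ((cc j).re + 2 * r j) ×ℂ
      Set.Ioc ((cc j).im - 2 * r j) ((cc j).im + 2 * r j) := by
    intro z hz
    rw [Metric.mem_ball, Complex.dist_eq] at hz
    have h2 := (Complex.abs_re_le_norm (z - cc j)).trans_lt hz
    have h3 := (Complex.abs_im_le_norm (z - cc j)).trans_lt hz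
    rw [Complex.sub_re, abs_lt] at h2
    rw [Complex.sub_im, abs_lt] at h3
    exact ⟨⟨by linarith [h2.1], by linarith [h2.2]⟩, ⟨by linarith [h3.1], by linarith [h3.2]⟩⟩
  have h2 : (volume ((Set.Ioc a b ×ℂ Set.Ioc c d) ∩ Metric.ball (cc j) (2 * r j))).toReal
      ≤ 16 * (r j) ^ 2 := by
    have : volume ((Set.Ioc a b ×ℂ Set.Ioc c d) ∩ Metric.ball (cc j) (2 * r j)) ≤
        volume (Set.Ioc ((cc j).re - 2 * r j) ((cc j).re + 2 * r j) ×ℂ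
          Set.Ioc ((cc j).im - 2 * r j) ((cc j).im + 2 * r j)) :=
      measure_mono ((Set.inter_subset_right).trans h1)
    rw [volume_reProdIm_Ioc] at this
    calc (volume ((Set.Ioc a b ×ℂ Set.Ioc c d) ∩ Metric.ball (cc j) (2 * r j))).toReal
        ≤ (ENNReal.ofReal ((cc j).re + 2 * r j - ((cc j).re - 2 * r j)) *
           ENNReal.ofReal ((cc j).im + 2 * r j - ((cc j).im - 2 * r j))).toReal := by
          refine ENNReal.toReal_mono ?_ this
          exact ENNReal.mul_ne_top ENNReal.ofReal_ne_top ENNReal.ofReal_ne_top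
      _ = 16 * (r j) ^ 2 := by
          rw [ENNReal.toReal_mul, ENNReal.toReal_ofReal (by linarith),
            ENNReal.toReal_ofReal (by linarith)]
          ring
  rw [div_le_iff₀ hrj]
  nlinarith [h2]


lemma reProdIm_mono {s s' t t' : Set ℝ} (hs : s ⊆ s') (ht : t ⊆ t') :
    (s ×ℂ t) ⊆ s' ×ℂ t' := fun z hz => by
  rw [Complex.mem_reProdIm] at hz ⊢; exact ⟨hs hz.1, ht hz.2⟩

lemma dist_le_rect {a b c d : ℝ} {z w : ℂ} (hz : z ∈ Set.Icc a b ×ℂ Set.Icc c d)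
    (hw : w ∈ Set.Icc a b ×ℂ Set.Icc c d) : dist z w ≤ (b - a) + (d - c) := by
  rw [Complex.mem_reProdIm, Set.mem_Icc, Set.mem_Icc] at hz hw
  rw [Complex.dist_eq]
  calc ‖z - w‖ ≤ |(z - w).re| + |(z - w).im| := Complex.norm_le_abs_re_add_abs_im _
    _ ≤ (b - a) + (d - c) := by
        rw [Complex.sub_re, Complex.sub_im]
        have h1 : |z.re - w.re| ≤ b - a := abs_sub_le_iff.mpr ⟨by linarith [hz.1.1, hz.1.2, hw.1.1, hw.1.2], by linarith [hz.1.1, hz.1.2, hw.1.1, hw.1.2]⟩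
        have h2 : |z.im - w.im| ≤ d - c := abs_sub_le_iff.mpr ⟨by linarith [hz.2.1, hz.2.2, hw.2.1, hw.2.2], by linarith [hz.2.1, hz.2.2, hw.2.1, hw.2.2]⟩
        linarith
lemma half_max (x y : ℝ) : max (x/2) (y/2) = (max x y)/2 := by
  rcases le_total x y with h | h
  · rw [max_eq_right h, max_eq_right (by linarith)]
  · rw [max_eq_left h, max_eq_left (by linarith)]

lemma half_min (x y : ℝ) : min (x/2) (y/2) = (min x y)/2 := by
  rcases le_total x y with h | h
  · rw [min_eq_left h, min_eq_left (by linarith)]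
  · rw [min_eq_right h, min_eq_right (by linarith)]

lemma key_ind (f : ℂ → ℂ) (E : Set ℂ) (hf : Continuous f) (hfd : DifferentiableOn ℂ f Eᶜ)
    (J : Finset ℕ) (cc : ℕ → ℂ) (r : ℕ → ℝ) (hr : ∀ j ∈ J, 0 < r j)
    (hEc : E ⊆ ⋃ j ∈ J, Metric.ball (cc j) (r j))
    (ε : ℝ) (hε : 0 ≤ ε) (D : Set ℂ)
    (hosc : ∀ j ∈ J, ∀ x ∈ D, ∀ y ∈ D, dist x y ≤ r j → ‖f x - f y‖ ≤ ε)
    (A : ℝ) (hA : 0 ≤ A) (ρ : ℝ) (hρ : 0 < ρ) (hρr : ∀ j ∈ J, ρ ≤ r j / 4) :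
    ∀ n : ℕ, ∀ a b c d : ℝ, a < b → c < d →
      max (b-a) (d-c) ≤ A * min (b-a) (d-c) →
      max (b-a) (d-c) ≤ 2^n * ρ →
      (∀ j ∈ J, ((Set.Icc a b ×ℂ Set.Icc c d) ∩ Metric.ball (cc j) (r j)).Nonempty →
        r j < 4 * max (b-a) (d-c)) →
      (Set.Icc a b ×ℂ Set.Icc c d) ⊆ D →
      ‖RI f a b c d‖ ≤ 16 * A * ε * nu J cc r a b c d := by
  intro n
  induction n with
  | zero =>
    intro a b c d hab hcd hAr hsize hG hD
    by_cases hEmp : (Set.Icc a b ×ℂ Set.Icc c d) ∩ E = ∅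
    · have h0 : RI f a b c d = 0 := by
        refine RI_eq_zero hab.le hcd.le hf (hfd.mono ?_)
        intro z hz
        have hz' : z ∈ Set.Icc a b ×ℂ Set.Icc c d :=
          reProdIm_mono Set.Ioo_subset_Icc_self Set.Ioo_subset_Icc_self hz
        intro hzE
        exact absurd (Set.mem_inter hz' hzE) (by rw [hEmp]; exact Set.notMem_empty z)
      rw [h0, norm_zero]
      have := nu_nonneg J cc r hr a b c d
      positivity
    · obtain ⟨p, hpR, hpE⟩ := Set.nonempty_iff_ne_empty.mpr hEmp
      obtain ⟨j, hj, hpb⟩ := Set.mem_iUnion₂.mp (hEc hpE)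
      have h1 := hG j hj ⟨p, hpR, hpb⟩
      have h2 := hρr j hj
      rw [pow_zero, one_mul] at hsize
      linarith
  | succ n ih =>
    intro a b c d hab hcd hAr hsize hG hD
    by_cases hEmp : (Set.Icc a b ×ℂ Set.Icc c d) ∩ E = ∅
    · have h0 : RI f a b c d = 0 := by
        refine RI_eq_zero hab.le hcd.le hf (hfd.mono ?_)
        intro z hz
        have hz' : z ∈ Set.Icc a b ×ℂ Set.Icc c d :=
          reProdIm_mono Set.Ioo_subset_Icc_self Set.Ioo_subset_Icc_self hz
        intro hzE
        exact absurd (Set.mem_inter hz' hzE) (by rw [hEmp]; exact Set.notMem_empty z)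
      rw [h0, norm_zero]
      have := nu_nonneg J cc r hr a b c d
      positivity
    · by_cases hstop : ∃ j ∈ J, ((Set.Icc a b ×ℂ Set.Icc c d) ∩ Metric.ball (cc j) (r j)).Nonempty
          ∧ max (b-a) (d-c) ≤ r j / 2
      · -- stopped case
        obtain ⟨j, hj, ⟨q, hqR, hqb⟩, hstop⟩ := hstop
        have hrj := hr j hj
        have hWm : b - a ≤ max (b-a) (d-c) := le_max_left _ _
        have hHm : d - c ≤ max (b-a) (d-c) := le_max_right _ _
        have hWH : (b - a) + (d - c) ≤ r j := by
          have := le_max_left (b-a) (d-c); linarith [le_max_right (b-a) (d-c)]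
        have hdist : ∀ z ∈ Set.Icc a b ×ℂ Set.Icc c d, dist z q ≤ r j := fun z hz =>
          (dist_le_rect hz hqR).trans hWH
        have hball : (Set.Icc a b ×ℂ Set.Icc c d) ⊆ Metric.ball (cc j) (2 * r j) := by
          intro z hz
          rw [Metric.mem_ball]
          calc dist z (cc j) ≤ dist z q + dist q (cc j) := dist_triangle _ _ _
            _ < r j + r j := add_lt_add_of_le_of_lt (hdist z hz) (Metric.mem_ball.mp hqb)
            _ = 2 * r j := by ring
        have hRIb : ‖RI f a b c d‖ ≤ 2 * ((b - a) + (d - c)) * ε :=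
          RI_bound hf hab.le hcd.le (f q) hε fun z hz =>
            hosc j hj z (hD hz) q (hD hqR) (hdist z hz)
        have hnl : (b - a) * (d - c) / r j ≤ nu J cc r a b c d :=
          nu_lower hr hab.le hcd.le hj
            ((reProdIm_mono Set.Ioc_subset_Icc_self Set.Ioc_subset_Icc_self).trans hball)
        have hguard := hG j hj ⟨q, hqR, hqb⟩
        -- arithmetic
        have hmul : (b - a) * (d - c) ≤ nu J cc r a b c d * r j :=
          (div_le_iff₀ hrj).mp hnl
        set ν := nu J cc r a b c d with hν
        have hνn : 0 ≤ ν := nu_nonneg J cc r hr a b c d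
        have harith : ∀ W H : ℝ, 0 < W → 0 < H → W ≤ H → H ≤ A * W → r j < 4 * H →
            W * H ≤ ν * r j → 2 * (W + H) * ε ≤ 16 * A * ε * ν := by
          intro W H hW hH hWH' hHA hrj4 hmul'
          have s1 : H * H ≤ A * W * H := by nlinarith
          have s2 : H * r j ≤ 4 * (A * W * H) := by nlinarith
          have s3 : A * (W * H) ≤ A * (ν * r j) := mul_le_mul_of_nonneg_left hmul' hA
          have s4 : H * r j ≤ 4 * A * ν * r j := by nlinarith
          have s5 : H ≤ 4 * A * ν := le_of_mul_le_mul_right (by nlinarith) hrj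
          nlinarith
        refine hRIb.trans ?_
        rcases le_total (b - a) (d - c) with hc | hc
        · rw [max_eq_right hc] at hguard
          rw [max_eq_right hc, min_eq_left hc] at hAr
          exact harith (b-a) (d-c) (by linarith) (by linarith) hc hAr hguard hmul
        · rw [max_eq_left hc] at hguard
          rw [max_eq_left hc, min_eq_right hc] at hAr
          have := harith (d-c) (b-a) (by linarith) (by linarith) hc hAr hguard
            (by rw [mul_comm]; exact hmul)
          linarith [this]
      · -- split case
        have hstop' : ∀ j ∈ J, ((Set.Icc a b ×ℂ Set.Icc c d) ∩ Metric.ball (cc j) (r j)).Nonempty →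
            r j / 2 < max (b-a) (d-c) := by
          intro j hj hne
          by_contra hle
          exact hstop ⟨j, hj, hne, not_lt.mp hle⟩
        set m := (a+b)/2 with hm
        set p := (c+d)/2 with hp
        have hm1 : a < m := by rw [hm]; linarith
        have hm2 : m < b := by rw [hm]; linarith
        have hp1 : c < p := by rw [hp]; linarith
        have hp2 : p < d := by rw [hp]; linarith
        have hsub : ∀ a' b' c' d' : ℝ, a ≤ a' → b' ≤ b → c ≤ c' → d' ≤ d →
            (Set.Icc a' b' ×ℂ Set.Icc c' d') ⊆ (Set.Icc a b ×ℂ Set.Icc c d) :=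
          fun a' b' c' d' h1 h2 h3 h4 =>
            reProdIm_mono (Set.Icc_subset_Icc h1 h2) (Set.Icc_subset_Icc h3 h4)
        have happly : ∀ a' b' c' d' : ℝ, a' < b' → c' < d' → b' - a' = (b-a)/2 →
            d' - c' = (d-c)/2 →
            (Set.Icc a' b' ×ℂ Set.Icc c' d') ⊆ (Set.Icc a b ×ℂ Set.Icc c d) →
            ‖RI f a' b' c' d'‖ ≤ 16 * A * ε * nu J cc r a' b' c' d' := by
          intro a' b' c' d' h1 h2 h3 h4 h5
          refine ih a' b' c' d' h1 h2 ?_ ?_ ?_ (h5.trans hD)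
          · rw [h3, h4, half_max, half_min]
            rcases le_total (b-a) (d-c) with h | h
            · rw [max_eq_right h, min_eq_left h] at hAr ⊢; linarith
            · rw [max_eq_left h, min_eq_right h] at hAr ⊢; linarith
          · rw [h3, h4, half_max]
            have : (2:ℝ)^(n+1) = 2 * 2^n := by ring
            rw [this] at hsize
            linarith [hsize]
          · intro j hj hne
            have hne' : ((Set.Icc a b ×ℂ Set.Icc c d) ∩ Metric.ball (cc j) (r j)).Nonempty := by
              obtain ⟨z, hz1, hz2⟩ := hne
              exact ⟨z, h5 hz1, hz2⟩
            have := hstop' j hj hne'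
            rw [h3, h4, half_max]
            linarith [this]
        have e1 : m - a = (b - a)/2 := by rw [hm]; ring
        have e2 : b - m = (b - a)/2 := by rw [hm]; ring
        have e3 : p - c = (d - c)/2 := by rw [hp]; ring
        have e4 : d - p = (d - c)/2 := by rw [hp]; ring
        have b1 := happly a m c p hm1 hp1 e1 e3 (hsub _ _ _ _ le_rfl hm2.le le_rfl hp2.le)
        have b2 := happly m b c p hm2 hp1 e2 e3 (hsub _ _ _ _ hm1.le le_rfl le_rfl hp2.le)
        have b3 := happly a m p d hm1 hp2 e1 e4 (hsub _ _ _ _ le_rfl hm2.le hp1.le le_rfl)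
        have b4 := happly m b p d hm2 hp2 e2 e4 (hsub _ _ _ _ hm1.le le_rfl hp1.le le_rfl)
        rw [RI_quad f hf a b c d, nu_quad J cc r hab.le hcd.le]
        calc ‖RI f a m c p + RI f m b c p + RI f a m p d + RI f m b p d‖
            ≤ ‖RI f a m c p‖ + ‖RI f m b c p‖ + ‖RI f a m p d‖ + ‖RI f m b p d‖ := by
              refine (norm_add_le _ _).trans ?_
              refine add_le_add ((norm_add_le _ _).trans (add_le_add (norm_add_le _ _) le_rfl)) le_rfl
          _ ≤ 16 * A * ε * (nu J cc r a m c p + nu J cc r m b c p + nu J cc r a m p d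
              + nu J cc r m b p d) := by linarith [b1, b2, b3, b4]

lemma cover_extract (E : Set ℂ) (hE : IsCompact E) (hfin : μH[1] E < ⊤) {δ : ℝ} (hδ : 0 < δ) :
    ∃ (J : Finset ℕ) (cc : ℕ → ℂ) (r : ℕ → ℝ),
      (∀ j ∈ J, 0 < r j) ∧ (∀ j ∈ J, r j ≤ δ) ∧
      (E ⊆ ⋃ j ∈ J, Metric.ball (cc j) (r j)) ∧
      (∑ j ∈ J, r j ≤ (μH[1] E).toReal + 1 + δ) := by
  classical
  set M : ℝ≥0∞ := μH[1] E with hM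
  set δ' : ℝ := δ / 2 with hδ'
  have hδ'pos : 0 < δ' := by positivity
  have happ := MeasureTheory.Measure.hausdorffMeasure_apply 1 E
  have hlt : M < M + 1 := ENNReal.lt_add_right hfin.ne one_ne_zero
  have hinf : (⨅ (t : ℕ → Set ℂ) (_ : E ⊆ ⋃ n, t n)
      (_ : ∀ n, EMetric.diam (t n) ≤ ENNReal.ofReal δ'),
      ∑' n, ⨆ _ : (t n).Nonempty, EMetric.diam (t n) ^ (1:ℝ)) < M + 1 := by
    refine lt_of_le_of_lt ?_ hlt
    rw [hM, happ]
    exact le_iSup₂ (f := fun (r : ℝ≥0∞) (_ : 0 < r) => ⨅ (t : ℕ → Set ℂ) (_ : E ⊆ ⋃ n, t n)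
      (_ : ∀ n, EMetric.diam (t n) ≤ r), ∑' n, ⨆ _ : (t n).Nonempty, EMetric.diam (t n) ^ (1:ℝ))
      (ENNReal.ofReal δ') (by simpa using hδ'pos)
  rw [iInf_lt_iff] at hinf
  obtain ⟨t, hinf⟩ := hinf
  rw [iInf_lt_iff] at hinf
  obtain ⟨hcov, hinf⟩ := hinf
  rw [iInf_lt_iff] at hinf
  obtain ⟨hdiam, hsum⟩ := hinf
  simp only [ENNReal.rpow_one] at hsum
  -- ediam of each t n is ≤ ofReal δ', in particular finite
  have hdne : ∀ n, EMetric.diam (t n) ≠ ⊤ := fun n =>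
    ne_top_of_le_ne_top ENNReal.ofReal_ne_top (hdiam n)
  have hdle : ∀ n, EMetric.diam (t n) ≤ ⨆ _ : (t n).Nonempty, EMetric.diam (t n) := by
    intro n
    by_cases h : (t n).Nonempty
    · simp [h]
    · rw [Set.not_nonempty_iff_eq_empty] at h
      simp [h]; exact EMetric.diam_empty
  have hsum' : ∑' n, EMetric.diam (t n) < M + 1 :=
    lt_of_le_of_lt (ENNReal.tsum_le_tsum hdle) hsum
  set dn : ℕ → ℝ := fun n => (EMetric.diam (t n)).toReal with hdn
  have hdnn : ∀ n, 0 ≤ dn n := fun n => ENNReal.toReal_nonneg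
  have hdnle : ∀ n, dn n ≤ δ' := fun n =>
    ENNReal.toReal_le_of_le_ofReal hδ'pos.le (hdiam n)
  have hsummable : Summable dn :=
    ENNReal.summable_toReal hsum'.ne_top
  have htsumdn : ∑' n, dn n ≤ (M + 1).toReal := by
    rw [hdn, ← ENNReal.tsum_toReal_eq hdne]
    exact ENNReal.toReal_mono (by simp [hfin.ne]) hsum'.le
  set rad : ℕ → ℝ := fun n => dn n + δ' / 2 ^ (n + 1) with hrad
  have hradpos : ∀ n, 0 < rad n := fun n => by
    have : (0:ℝ) < δ' / 2 ^ (n + 1) := by positivity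
    have := hdnn n
    rw [hrad]; dsimp; linarith
  have hradle : ∀ n, rad n ≤ δ := fun n => by
    have h1 : δ' / 2 ^ (n + 1) ≤ δ' / 2 := by
      apply div_le_div_of_nonneg_left hδ'pos.le (by norm_num)
      calc (2:ℝ) = 2 ^ 1 := (pow_one 2).symm
        _ ≤ 2 ^ (n + 1) := pow_le_pow_right₀ (by norm_num) (by omega)
    have := hdnle n
    rw [hrad]; dsimp; rw [hδ'] at *; linarith
  have hgeo : Summable (fun n : ℕ => δ' / 2 ^ (n + 1)) := by
    have : (fun n : ℕ => δ' / 2 ^ (n + 1)) = fun n : ℕ => (δ' / 2) * (1 / 2) ^ n := by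
      funext n; rw [pow_succ, one_div_pow]; ring
    rw [this]
    exact (summable_geometric_of_lt_one (by norm_num) (by norm_num)).mul_left _
  have hradsummable : Summable rad := hsummable.add hgeo
  have htsumgeo : ∑' n : ℕ, δ' / 2 ^ (n + 1) = δ' := by
    have h1 : (fun n : ℕ => δ' / 2 ^ (n + 1)) = fun n : ℕ => (δ' / 2) * (1 / 2) ^ n := by
      funext n; rw [pow_succ, one_div_pow]; ring
    rw [h1, tsum_mul_left, tsum_geometric_of_lt_one (by norm_num) (by norm_num)]
    norm_num
  -- pick centers
  have hpick : ∀ n, ∃ p : ℂ, (t n).Nonempty → p ∈ t n := fun n => by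
    by_cases h : (t n).Nonempty
    · exact ⟨h.choose, fun _ => h.choose_spec⟩
    · exact ⟨0, fun hh => absurd hh h⟩
  set cc : ℕ → ℂ := fun n => (hpick n).choose with hcc
  have htball : ∀ n, t n ⊆ Metric.ball (cc n) (rad n) := by
    intro n x hx
    have hne : (t n).Nonempty := ⟨x, hx⟩
    have hp := (hpick n).choose_spec hne
    have hb : Bornology.IsBounded (t n) := by
      rw [Metric.isBounded_iff_ediam_ne_top]; exact hdne n
    have := Metric.dist_le_diam_of_mem hb hx hp
    rw [Metric.mem_ball]
    have h2 : (0:ℝ) < δ' / 2 ^ (n + 1) := by positivity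
    calc dist x (cc n) ≤ Metric.diam (t n) := this
      _ < rad n := by rw [hrad]; dsimp; rw [show Metric.diam (t n) = dn n from rfl]; linarith
  have hcov2 : E ⊆ ⋃ n, Metric.ball (cc n) (rad n) :=
    hcov.trans (Set.iUnion_mono htball)
  obtain ⟨J, hJ⟩ := hE.elim_finite_subcover (fun n => Metric.ball (cc n) (rad n))
    (fun n => Metric.isOpen_ball) hcov2
  refine ⟨J, cc, rad, fun j _ => hradpos j, fun j _ => hradle j, hJ, ?_⟩
  calc ∑ j ∈ J, rad j ≤ ∑' n, rad n := Summable.sum_le_tsum J (fun i _ => (hradpos i).le) hradsummable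
    _ = (∑' n, dn n) + δ' := by rw [hrad, Summable.tsum_add hsummable hgeo, htsumgeo]
    _ ≤ (M + 1).toReal + δ' := by linarith
    _ ≤ (μH[1] E).toReal + 1 + δ := by
        rw [ENNReal.toReal_add hfin.ne (by norm_num), hM]
        norm_num
        rw [hδ']; linarith


lemma RI_zero_ordered (E : Set ℂ) (f : ℂ → ℂ) (hE : IsCompact E) (hfin : μH[1] E < ⊤)
    (hf : Continuous f) (hfd : DifferentiableOn ℂ f Eᶜ) {a b c d : ℝ}
    (hab : a ≤ b) (hcd : c ≤ d) : RI f a b c d = 0 := by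
  rcases eq_or_lt_of_le hab with h | hab'
  · rw [← h]; exact RI_degH f a c d
  rcases eq_or_lt_of_le hcd with h | hcd'
  · rw [← h]; exact RI_degV f a b c
  clear hab hcd
  -- the rectangle
  set D : Set ℂ := Set.Icc a b ×ℂ Set.Icc c d with hD
  have hDsub : D ⊆ Metric.closedBall 0 (|a| + |b| + |c| + |d|) := by
    intro z hz
    obtain ⟨hz1, hz2⟩ := hz
    rw [Set.mem_preimage, Set.mem_Icc] at hz1 hz2
    rw [Metric.mem_closedBall, Complex.dist_eq, sub_zero]
    calc ‖z‖ ≤ |z.re| + |z.im| := Complex.norm_le_abs_re_add_abs_im z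
      _ ≤ (|a| + |b|) + (|c| + |d|) := by
          have h1 : |z.re| ≤ |a| + |b| := by
            rw [abs_le]
            constructor
            · linarith [neg_abs_le a, hz1.1, abs_nonneg b]
            · linarith [le_abs_self b, hz1.2, abs_nonneg a]
          have h2 : |z.im| ≤ |c| + |d| := by
            rw [abs_le]
            constructor
            · linarith [neg_abs_le c, hz2.1, abs_nonneg d]
            · linarith [le_abs_self d, hz2.2, abs_nonneg c]
          linarith
      _ = |a| + |b| + |c| + |d| := by ring
  have hDclosed : IsClosed D :=
    (isClosed_Icc.preimage Complex.continuous_re).inter (isClosed_Icc.preimage Complex.continuous_im)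
  have hDcompact : IsCompact D :=
    (isCompact_closedBall 0 _).of_isClosed_subset hDclosed hDsub
  have hunif : UniformContinuousOn f D := hDcompact.uniformContinuousOn_of_continuous hf.continuousOn
  rw [Metric.uniformContinuousOn_iff] at hunif
  -- final bound : for all ε' > 0
  set A : ℝ := max (b-a) (d-c) / min (b-a) (d-c) with hA
  have hminpos : 0 < min (b-a) (d-c) := lt_min (by linarith) (by linarith)
  have hmaxpos : 0 < max (b-a) (d-c) := lt_of_lt_of_le hminpos (min_le_max)
  have hApos : 0 < A := div_pos hmaxpos hminpos
  have hbound : ∀ ε' > (0:ℝ), ‖RI f a b c d‖ ≤ 16 * A * ε' * (16 * ((μH[1] E).toReal + 2)) := by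
    intro ε' hε'
    obtain ⟨δ₁, hδ₁, hcont⟩ := hunif ε' hε'
    set δ : ℝ := min δ₁ (min 1 (max (b-a) (d-c))) / 2 with hδdef
    have hδpos : 0 < δ := by
      apply div_pos _ (by norm_num)
      exact lt_min hδ₁ (lt_min one_pos hmaxpos)
    have hδ1 : δ < δ₁ := by
      have : δ ≤ δ₁ / 2 := by
        rw [hδdef]
        have := min_le_left δ₁ (min 1 (max (b-a) (d-c)))
        linarith
      linarith
    have hδle1 : δ ≤ 1 := by
      have h1 : min δ₁ (min 1 (max (b-a) (d-c))) ≤ 1 := (min_le_right _ _).trans (min_le_left _ _)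
      rw [hδdef]; linarith
    have hδmax : δ ≤ max (b-a) (d-c) / 2 := by
      have h1 : min δ₁ (min 1 (max (b-a) (d-c))) ≤ max (b-a) (d-c) :=
        (min_le_right _ _).trans (min_le_right _ _)
      rw [hδdef]; linarith
    obtain ⟨J, cc, r, hr, hrδ, hcov, hsum⟩ := cover_extract E hE hfin hδpos
    -- oscillation hypothesis
    have hosc : ∀ j ∈ J, ∀ x ∈ D, ∀ y ∈ D, dist x y ≤ r j → ‖f x - f y‖ ≤ ε' := by
      intro j hj x hx y hy hdist
      have : dist x y < δ₁ := lt_of_le_of_lt (hdist.trans (hrδ j hj)) hδ1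
      have := hcont x hx y hy this
      rw [dist_eq_norm] at this
      exact this.le
    -- rho
    classical
    obtain ⟨ρ, hρpos, hρr⟩ : ∃ ρ : ℝ, 0 < ρ ∧ ∀ j ∈ J, ρ ≤ r j / 4 := by
      refine ⟨(insert (1:ℝ) (J.image fun j => r j / 4)).min' ⟨1, Finset.mem_insert_self _ _⟩,
        ?_, fun j hj => Finset.min'_le _ _
          (Finset.mem_insert_of_mem (Finset.mem_image_of_mem _ hj))⟩
      have hmem := Finset.min'_mem (insert (1:ℝ) (J.image fun j => r j / 4))
        ⟨1, Finset.mem_insert_self _ _⟩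
      rcases Finset.mem_insert.mp hmem with h | h
      · rw [h]; norm_num
      · obtain ⟨j, hj, hjeq⟩ := Finset.mem_image.mp h
        rw [← hjeq]
        have := hr j hj
        positivity
    -- n
    obtain ⟨n, hn⟩ := pow_unbounded_of_one_lt (max (b-a) (d-c) / ρ) (by norm_num : (1:ℝ) < 2)
    have hsize : max (b-a) (d-c) ≤ 2^n * ρ := by
      rw [div_lt_iff₀ hρpos] at hn
      linarith
    -- guard at root
    have hguard : ∀ j ∈ J, ((Set.Icc a b ×ℂ Set.Icc c d) ∩ Metric.ball (cc j) (r j)).Nonempty →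
        r j < 4 * max (b-a) (d-c) := by
      intro j hj _
      have := hrδ j hj
      linarith [hδmax]
    have hAr : max (b-a) (d-c) ≤ A * min (b-a) (d-c) := by
      rw [hA, div_mul_cancel₀]
      exact hminpos.ne'
    have := key_ind f E hf hfd J cc r hr hcov ε' hε'.le D hosc A hApos.le ρ hρpos hρr n
      a b c d hab' hcd' hAr hsize hguard (by rw [hD])
    refine this.trans ?_
    have hnu : nu J cc r a b c d ≤ 16 * ((μH[1] E).toReal + 2) := by
      refine (nu_upper hr a b c d).trans ?_
      have : ∑ j ∈ J, 16 * r j = 16 * ∑ j ∈ J, r j := by rw [Finset.mul_sum]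
      rw [this]
      have h2 : ∑ j ∈ J, r j ≤ (μH[1] E).toReal + 2 := by linarith [hsum, hδle1]
      linarith
    have h16 : 0 ≤ 16 * A * ε' := by positivity
    exact mul_le_mul_of_nonneg_left hnu h16
  -- conclude RI = 0
  set C : ℝ := 16 * A * (16 * ((μH[1] E).toReal + 2)) with hC
  have hCpos : 0 < C := by
    rw [hC]
    have : (0:ℝ) ≤ (μH[1] E).toReal := ENNReal.toReal_nonneg
    positivity
  have hboundC : ∀ ε' > (0:ℝ), ‖RI f a b c d‖ ≤ C * ε' := by
    intro ε' hε'
    have := hbound ε' hε'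
    calc ‖RI f a b c d‖ ≤ 16 * A * ε' * (16 * ((μH[1] E).toReal + 2)) := this
      _ = C * ε' := by rw [hC]; ring
  by_contra hne
  have hpos : 0 < ‖RI f a b c d‖ := by
    rcases (norm_nonneg (RI f a b c d)).lt_or_eq with h | h
    · exact h
    · exact absurd (norm_eq_zero.mp h.symm) hne
  have hb := hboundC (‖RI f a b c d‖ / (2 * C)) (by positivity)
  have heq : C * (‖RI f a b c d‖ / (2 * C)) = ‖RI f a b c d‖ / 2 := by
    field_simp
  rw [heq] at hb
  linarith


lemma RI_zero_all (E : Set ℂ) (f : ℂ → ℂ) (hE : IsCompact E) (hfin : μH[1] E < ⊤)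
    (hf : Continuous f) (hfd : DifferentiableOn ℂ f Eᶜ) (a b c d : ℝ) :
    RI f a b c d = 0 := by
  rcases le_total a b with h1 | h1 <;> rcases le_total c d with h2 | h2
  · exact RI_zero_ordered E f hE hfin hf hfd h1 h2
  · rw [RI_swapV f a b d c, RI_zero_ordered E f hE hfin hf hfd h1 h2, neg_zero]
  · rw [RI_swapH f b a c d, RI_zero_ordered E f hE hfin hf hfd h1 h2, neg_zero]
  · rw [RI_swapH f b a c d, RI_swapV f b a d c, RI_zero_ordered E f hE hfin hf hfd h1 h2,
      neg_zero, neg_zero]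

noncomputable def Prim (f : ℂ → ℂ) (z : ℂ) : ℂ :=
  (∫ x : ℝ in (0:ℝ)..z.re, f (x + (0:ℝ) * I)) + I * ∫ y : ℝ in (0:ℝ)..z.im, f (z.re + y * I)

lemma Prim_hasDerivAt (f : ℂ → ℂ) (hf : Continuous f)
    (hRI : ∀ a b c d : ℝ, RI f a b c d = 0) (z : ℂ) :
    HasDerivAt (Prim f) (f z) z := by
  rw [hasDerivAt_iff_isLittleO, Asymptotics.isLittleO_iff]
  intro ε hε
  obtain ⟨δ, hδ, hcont⟩ := Metric.continuousAt_iff.mp hf.continuousAt (ε/2) (by positivity)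
  filter_upwards [Metric.ball_mem_nhds z (by positivity : (0:ℝ) < δ/2)] with w hw
  rw [Metric.mem_ball] at hw
  have hwz : dist w z < δ / 2 := hw
  -- key identity
  have adj1 : (∫ x : ℝ in (0:ℝ)..w.re, f (x + (0:ℝ) * I)) =
      (∫ x : ℝ in (0:ℝ)..z.re, f (x + (0:ℝ) * I)) + ∫ x : ℝ in z.re..w.re, f (x + (0:ℝ) * I) :=
    (integral_add_adjacent_intervals ((contH f hf 0).intervalIntegrable _ _)
      ((contH f hf 0).intervalIntegrable _ _)).symm
  have adj2 : (∫ y : ℝ in (0:ℝ)..w.im, f (w.re + y * I)) =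
      (∫ y : ℝ in (0:ℝ)..z.im, f (w.re + y * I)) + ∫ y : ℝ in z.im..w.im, f (w.re + y * I) :=
    (integral_add_adjacent_intervals ((contV f hf w.re).intervalIntegrable _ _)
      ((contV f hf w.re).intervalIntegrable _ _)).symm
  have hrect := hRI z.re w.re 0 z.im
  rw [RI] at hrect
  have key : Prim f w - Prim f z =
      (∫ x : ℝ in z.re..w.re, f (x + z.im * I)) + I * ∫ y : ℝ in z.im..w.im, f (w.re + y * I) := by
    rw [Prim, Prim, adj1, adj2]
    linear_combination hrect
  have hconst1 : (∫ x : ℝ in z.re..w.re, (f z : ℂ)) = (w.re - z.re) • f z :=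
    intervalIntegral.integral_const _
  have hconst2 : (∫ y : ℝ in z.im..w.im, (f z : ℂ)) = (w.im - z.im) • f z :=
    intervalIntegral.integral_const _
  have hwz2 : (w - z) • f z = ((w.re - z.re : ℝ) : ℂ) * f z + I * (((w.im - z.im : ℝ) : ℂ) * f z) := by
    rw [smul_eq_mul]
    have : (w : ℂ) - z = ((w.re - z.re : ℝ) : ℂ) + ((w.im - z.im : ℝ) : ℂ) * I := by
      simp [Complex.ext_iff]
    rw [this]; ring
  have main : Prim f w - Prim f z - (w - z) • f z =
      (∫ x : ℝ in z.re..w.re, (f (x + z.im * I) - f z)) +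
      I * ∫ y : ℝ in z.im..w.im, (f (w.re + y * I) - f z) := by
    rw [intervalIntegral.integral_sub ((contH f hf z.im).intervalIntegrable _ _)
      intervalIntegrable_const,
      intervalIntegral.integral_sub ((contV f hf w.re).intervalIntegrable _ _)
      intervalIntegrable_const, hconst1, hconst2, key, hwz2,
      Complex.real_smul, Complex.real_smul]
    push_cast
    ring
  rw [main]
  -- bounds
  have hre : |w.re - z.re| ≤ dist w z := by
    rw [Complex.dist_eq, ← Complex.sub_re]
    exact Complex.abs_re_le_norm _
  have him : |w.im - z.im| ≤ dist w z := by
    rw [Complex.dist_eq, ← Complex.sub_im]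
    exact Complex.abs_im_le_norm _
  have n1 : ‖∫ x : ℝ in z.re..w.re, (f (x + z.im * I) - f z)‖ ≤ (ε/2) * |w.re - z.re| := by
    apply intervalIntegral.norm_integral_le_of_norm_le_const
    intro x hx
    have hx' : |x - z.re| ≤ |w.re - z.re| := by
      rw [Set.uIoc] at hx
      rcases le_total z.re w.re with h | h
      · rw [min_eq_left h, max_eq_right h] at hx
        rw [_root_.abs_of_nonneg (by linarith [hx.1] : (0:ℝ) ≤ x - z.re),
          _root_.abs_of_nonneg (by linarith : (0:ℝ) ≤ w.re - z.re)]
        linarith [hx.2]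
      · rw [min_eq_right h, max_eq_left h] at hx
        rw [_root_.abs_of_nonpos (by linarith [hx.2] : x - z.re ≤ 0),
          _root_.abs_of_nonpos (by linarith : w.re - z.re ≤ 0)]
        linarith [hx.1]
    have hdist : dist (↑x + ↑z.im * I : ℂ) z < δ := by
      rw [Complex.dist_eq]
      have : (↑x + ↑z.im * I : ℂ) - z = ((x - z.re : ℝ) : ℂ) := by
        have hz := Complex.re_add_im z
        simp [Complex.ext_iff]
      rw [this, Complex.norm_real, Real.norm_eq_abs]
      calc |x - z.re| ≤ |w.re - z.re| := hx'
        _ ≤ dist w z := hre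
        _ < δ := by linarith
    have := hcont hdist
    rw [Complex.dist_eq] at this
    exact le_of_lt this
  have n2 : ‖∫ y : ℝ in z.im..w.im, (f (w.re + y * I) - f z)‖ ≤ (ε/2) * |w.im - z.im| := by
    apply intervalIntegral.norm_integral_le_of_norm_le_const
    intro y hy
    have hy' : |y - z.im| ≤ |w.im - z.im| := by
      rw [Set.uIoc] at hy
      rcases le_total z.im w.im with h | h
      · rw [min_eq_left h, max_eq_right h] at hy
        rw [_root_.abs_of_nonneg (by linarith [hy.1] : (0:ℝ) ≤ y - z.im),
          _root_.abs_of_nonneg (by linarith : (0:ℝ) ≤ w.im - z.im)]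
        linarith [hy.2]
      · rw [min_eq_right h, max_eq_left h] at hy
        rw [_root_.abs_of_nonpos (by linarith [hy.2] : y - z.im ≤ 0),
          _root_.abs_of_nonpos (by linarith : w.im - z.im ≤ 0)]
        linarith [hy.1]
    have hdist : dist (↑w.re + ↑y * I : ℂ) z < δ := by
      rw [Complex.dist_eq]
      have heq : (↑w.re + ↑y * I : ℂ) - z = ((w.re - z.re : ℝ) : ℂ) + ((y - z.im : ℝ) : ℂ) * I := by
        simp [Complex.ext_iff]
      rw [heq]
      calc ‖(((w.re - z.re : ℝ) : ℂ) + ((y - z.im : ℝ) : ℂ) * I)‖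
          ≤ ‖((w.re - z.re : ℝ) : ℂ)‖ + ‖(((y - z.im : ℝ) : ℂ) * I)‖ :=
            norm_add_le _ _
        _ = |w.re - z.re| + |y - z.im| := by
            rw [norm_mul, Complex.norm_I, mul_one, Complex.norm_real, Complex.norm_real, Real.norm_eq_abs, Real.norm_eq_abs]
        _ ≤ dist w z + dist w z := by
            refine add_le_add hre (hy'.trans him)
        _ < δ := by linarith
    have := hcont hdist
    rw [Complex.dist_eq] at this
    exact le_of_lt this
  calc ‖(∫ x : ℝ in z.re..w.re, (f (x + z.im * I) - f z)) +
        I * ∫ y : ℝ in z.im..w.im, (f (w.re + y * I) - f z)‖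
      ≤ ‖∫ x : ℝ in z.re..w.re, (f (x + z.im * I) - f z)‖ +
        ‖I * ∫ y : ℝ in z.im..w.im, (f (w.re + y * I) - f z)‖ := norm_add_le _ _
    _ ≤ (ε/2) * |w.re - z.re| + (ε/2) * |w.im - z.im| := by
        rw [norm_mul, Complex.norm_I, one_mul]
        exact add_le_add n1 n2
    _ ≤ ε * ‖w - z‖ := by
        have h1 : ‖w - z‖ = dist w z := by rw [dist_eq_norm]
        rw [h1]
        nlinarith [hre, him, dist_nonneg (x := w) (y := z)]


end BesicovitchAux

section BesicovitchMain
open Set intervalIntegral Metric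
open scoped ENNReal NNReal
open Complex

/-- (Besicovitch) A compact set `E ⊆ ℂ` of finite one-dimensional Hausdorff measure is
`A`-removable. -/
theorem stmt_11 (E : Set ℂ) (hE : IsCompact E) (hfin : μH[1] E < ⊤) :
    ARemovable E := by
  intro f hf hfd hL
  -- f is entire
  have hRI : ∀ a b c d : ℝ, RI f a b c d = 0 := RI_zero_all E f hE hfin hf hfd
  have hPrim : ∀ z : ℂ, HasDerivAt (Prim f) (f z) z := Prim_hasDerivAt f hf hRI
  have hPdiff : Differentiable ℂ (Prim f) := fun z => (hPrim z).differentiableAt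
  have hPanalytic : AnalyticOnNhd ℂ (Prim f) Set.univ :=
    Complex.analyticOnNhd_univ_iff_differentiable.mpr hPdiff
  have hderiv : deriv (Prim f) = f := funext fun z => (hPrim z).deriv
  have hfdiff : Differentiable ℂ f := by
    intro z
    have := (hPanalytic.deriv z (Set.mem_univ z)).differentiableAt
    rw [hderiv] at this
    exact this
  -- f is bounded
  obtain ⟨L, hL⟩ := hL
  have hmem : f ⁻¹' Metric.ball L 1 ∈ cocompact ℂ := hL (Metric.ball_mem_nhds L one_pos)
  obtain ⟨K, hK, hKsub⟩ := mem_cocompact.mp hmem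
  have hbdd : Bornology.IsBounded (Set.range f) := by
    have hsub : Set.range f ⊆ f '' K ∪ Metric.ball L 1 := by
      rintro - ⟨x, rfl⟩
      by_cases hx : x ∈ K
      · exact Or.inl ⟨x, hx, rfl⟩
      · exact Or.inr (hKsub hx)
    exact Bornology.IsBounded.subset
      (((hK.image hf).isBounded).union Metric.isBounded_ball) hsub
  exact fun z w => hfdiff.apply_eq_apply_of_bounded hbdd z w

end BesicovitchMain
end

section
/- Let E ⊆ ℂ be a compact H∞-removable set. Then every injective holomorphic map on ℂ \ E that tends to ∞ at ∞ is affine: if f is holomorphic and injective on ℂ \ E and f(z) → ∞ as z → ∞ (i.e. f tends to the cocompact filter along the cocompact filter), then there exist a, b ∈ ℂ with a ≠ 0 such that f(z) = a z + b for all z ∈ ℂ \ E. (This is the planar form of the statement that H∞-removable sets are S-removable.) -/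
open Filter
open Topology

/-- A compact set `E ⊆ ℂ` is `H∞`-removable if every bounded holomorphic function on
`ℂ \ E` is constant. -/
def HInftyRemovable (E : Set ℂ) : Prop :=
  ∀ f : ℂ → ℂ, DifferentiableOn ℂ f Eᶜ → (∃ M : ℝ, ∀ z ∈ Eᶜ, ‖f z‖ ≤ M) →
    ∀ z ∈ Eᶜ, ∀ w ∈ Eᶜ, f z = f w


open Set Metric Complex Topology in
/-- If `f` is analytic at `x`, it has strict derivative `deriv f x` there. -/
lemma auxStrict {f : ℂ → ℂ} {x : ℂ} (h : AnalyticAt ℂ f x) :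
    HasStrictDerivAt f (deriv f x) x := by
  obtain ⟨p, hp⟩ := h
  have h1 := hp.hasStrictDerivAt
  have h2 := h1.hasDerivAt.deriv
  rwa [← h2] at h1

open Set Metric Complex Topology in
/-- An injective holomorphic function on an open set has nonvanishing derivative. -/
lemma auxInj {s : Set ℂ} (hs : IsOpen s) {f : ℂ → ℂ}
    (hf : DifferentiableOn ℂ f s) (hinj : Set.InjOn f s) {ζ : ℂ} (hζ : ζ ∈ s) :
    deriv f ζ ≠ 0 := by
  intro h0
  have hfa : AnalyticAt ℂ f ζ := (hf.analyticOnNhd hs) ζ hζ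
  have hga : AnalyticAt ℂ (fun z => f z - f ζ) ζ := hfa.sub analyticAt_const
  have hmem : ∀ᶠ z in 𝓝 ζ, z ∈ s := hs.mem_nhds hζ
  -- the order of `f - f ζ` at `ζ` is finite
  have horder : analyticOrderAt (fun z => f z - f ζ) ζ ≠ ⊤ := by
    intro htop
    have hz := analyticOrderAt_eq_top.mp htop
    have : ∀ᶠ z in 𝓝[≠] ζ, False := by
      filter_upwards [(hz.and hmem).filter_mono nhdsWithin_le_nhds,
        self_mem_nhdsWithin] with z hz' hz''
      have hfz : f z = f ζ := by
        have := hz'.1; rwa [sub_eq_zero] at this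
      exact hz'' (hinj hz'.2 hζ hfz)
    obtain ⟨_, h⟩ := this.exists
    exact h
  obtain ⟨n, hn⟩ := WithTop.ne_top_iff_exists.mp horder
  obtain ⟨u, hu, hu0, hgu⟩ := (hga.analyticOrderAt_eq_natCast (n := n)).mp hn.symm
  -- n ≠ 0
  have hn0 : n ≠ 0 := by
    intro h
    have := hgu.self_of_nhds
    simp [h] at this
    exact hu0 this.symm
  -- n ≠ 1
  have hn1 : n ≠ 1 := by
    intro h
    have hd1 : HasDerivAt (fun z => (z - ζ) ^ n • u z) (u ζ) ζ := by
      subst h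
      have h1 : HasDerivAt (fun z : ℂ => z - ζ) 1 ζ := (hasDerivAt_id ζ).sub_const ζ
      have h2 : HasDerivAt u (deriv u ζ) ζ := hu.differentiableAt.hasDerivAt
      have := h1.mul h2
      simpa [Pi.mul_def] using this
    have hde : deriv (fun z => f z - f ζ) ζ = u ζ :=
      Filter.EventuallyEq.deriv_eq hgu ▸ hd1.deriv
    rw [deriv_sub_const, h0] at hde
    exact hu0 hde.symm
  have hn2 : 2 ≤ n := by omega
  -- primitive root of unity
  set ω : ℂ := Complex.exp (2 * Real.pi * Complex.I / n) with hωdef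
  have hωprim : IsPrimitiveRoot ω n := Complex.isPrimitiveRoot_exp n hn0
  have hωn : ω ^ n = 1 := hωprim.pow_eq_one
  have hωne : ω ≠ 1 := hωprim.ne_one (by omega)
  -- n-th root of u ζ
  set c : ℂ := Complex.exp (Complex.log (u ζ) / n) with hcdef
  have hcn : c ^ n = u ζ := by
    rw [hcdef, ← Complex.exp_nat_mul, mul_div_cancel₀ _ (by exact_mod_cast hn0 : (n : ℂ) ≠ 0),
      Complex.exp_log hu0]
  have hcne : c ≠ 0 := Complex.exp_ne_zero _
  -- analytic n-th root of `u z / u ζ`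
  set v : ℂ → ℂ := fun z => Complex.exp ((n : ℂ)⁻¹ * Complex.log (u z * (u ζ)⁻¹)) with hvdef
  have hw1 : u ζ * (u ζ)⁻¹ = 1 := mul_inv_cancel₀ hu0
  have hva : AnalyticAt ℂ v ζ := by
    apply AnalyticAt.cexp
    apply AnalyticAt.mul analyticAt_const
    exact (hu.mul analyticAt_const).clog (by simp only [Pi.mul_apply, hw1]; exact Complex.one_mem_slitPlane)
  have hvζ : v ζ = 1 := by
    rw [hvdef]; simp [hw1]
  have hvn : ∀ᶠ z in 𝓝 ζ, v z ^ n = u z * (u ζ)⁻¹ := by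
    filter_upwards [hu.continuousAt.eventually_ne hu0] with z hz
    rw [hvdef]
    rw [← Complex.exp_nat_mul, mul_inv_cancel_left₀ (by exact_mod_cast hn0 : (n : ℂ) ≠ 0),
      Complex.exp_log (mul_ne_zero hz (inv_ne_zero hu0))]
  -- the root function φ
  set φ : ℂ → ℂ := fun z => c * (z - ζ) * v z with hφdef
  have hφa : AnalyticAt ℂ φ ζ :=
    (analyticAt_const.mul (analyticAt_id.sub analyticAt_const)).mul hva
  have hφζ : φ ζ = 0 := by simp [hφdef]
  have hφn : ∀ᶠ z in 𝓝 ζ, f z - f ζ = φ z ^ n := by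
    filter_upwards [hgu, hvn] with z h1 h2
    rw [h1, hφdef]
    simp only [mul_pow, hcn, h2, smul_eq_mul]
    field_simp
  -- φ has nonzero strict derivative c at ζ
  have hφd' : HasDerivAt φ c ζ := by
    have h1 : HasDerivAt (fun z : ℂ => c * (z - ζ)) c ζ := by
      simpa using ((hasDerivAt_id ζ).sub_const ζ).const_mul c
    have h2 : HasDerivAt v (deriv v ζ) ζ := hva.differentiableAt.hasDerivAt
    have := h1.mul h2
    simpa [hvζ, Pi.mul_def] using this
  have hφs : HasStrictDerivAt φ c ζ := by
    have := auxStrict hφa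
    rwa [hφd'.deriv] at this
  -- local surjectivity
  have hmap : map φ (𝓝 ζ) = 𝓝 0 := by
    have := hφs.map_nhds_eq hcne
    rwa [hφζ] at this
  have hS : {z | z ∈ s ∧ f z - f ζ = φ z ^ n} ∈ 𝓝 ζ := by
    filter_upwards [hmem, hφn] with z h1 h2
    exact ⟨h1, h2⟩
  have hI : φ '' {z | z ∈ s ∧ f z - f ζ = φ z ^ n} ∈ 𝓝 (0 : ℂ) := by
    rw [← hmap]; exact image_mem_map hS
  obtain ⟨δ, hδ, hball⟩ := Metric.mem_nhds_iff.mp hI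
  -- two preimages
  have hωnorm : ‖ω‖ = 1 := by
    have h1 : ‖ω‖ ^ n = 1 := by rw [← norm_pow, hωn, norm_one]
    rcases pow_eq_one_iff_cases.mp h1 with h | h | h
    · omega
    · exact h
    · have := norm_nonneg ω; rw [h.1] at this; linarith [this]
  set y₁ : ℂ := ((δ / 2 : ℝ) : ℂ) with hy₁def
  have hy₁norm : ‖y₁‖ = δ / 2 := by
    rw [hy₁def, Complex.norm_real, Real.norm_of_nonneg (by linarith)]
  have hy₁ne : y₁ ≠ 0 := by
    intro h; rw [h, norm_zero] at hy₁norm; linarith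
  have hy₁mem : y₁ ∈ Metric.ball (0 : ℂ) δ := by
    rw [Metric.mem_ball, dist_zero_right, hy₁norm]; linarith
  have hy₂mem : ω * y₁ ∈ Metric.ball (0 : ℂ) δ := by
    rw [Metric.mem_ball, dist_zero_right, norm_mul, hωnorm, one_mul, hy₁norm]; linarith
  obtain ⟨z₁, hz₁S, hz₁⟩ := hball hy₁mem
  obtain ⟨z₂, hz₂S, hz₂⟩ := hball hy₂mem
  have hfz : f z₁ = f z₂ := by
    have h1 : f z₁ - f ζ = y₁ ^ n := by rw [hz₁S.2, hz₁]
    have h2 : f z₂ - f ζ = y₁ ^ n := by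
      rw [hz₂S.2, hz₂, mul_pow, hωn, one_mul]
    exact sub_left_inj.mp (h1.trans h2.symm)
  have hzeq : z₁ = z₂ := hinj hz₁S.1 hz₂S.1 hfz
  have : φ z₁ ≠ φ z₂ := by
    rw [hz₁, hz₂]
    intro h
    exact hωne (mul_right_cancel₀ hy₁ne (by rw [one_mul]; exact h.symm))
  exact this (by rw [hzeq])

/-- An `H∞`-removable compact set is `S`-removable (planar form): every injective
holomorphic map on `ℂ \ E` tending to `∞` at `∞` is affine. -/
theorem stmt_13 (E : Set ℂ) (hE : IsCompact E) (hrem : HInftyRemovable E)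
    (f : ℂ → ℂ) (hf : DifferentiableOn ℂ f Eᶜ) (hinj : Set.InjOn f Eᶜ)
    (hinfty : Tendsto f (cocompact ℂ) (cocompact ℂ)) :
    ∃ a b : ℂ, a ≠ 0 ∧ ∀ z ∈ Eᶜ, f z = a * z + b := by
  have hΩ : IsOpen Eᶜ := hE.isClosed.isOpen_compl
  -- a point of Eᶜ far from E
  obtain ⟨R, hR⟩ : ∃ R, E ⊆ Metric.closedBall 0 R := hE.isBounded.subset_closedBall 0
  set ζ : ℂ := ((|R| + 1 : ℝ) : ℂ) with hζdef
  have hζnorm : ‖ζ‖ = |R| + 1 := by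
    rw [hζdef, Complex.norm_real, Real.norm_of_nonneg (by positivity)]
  have hζE : ∀ e ∈ E, 1 ≤ dist ζ e := by
    intro e he
    have h1 : ‖e‖ ≤ R := by simpa using hR he
    have h2 : ‖ζ‖ - ‖e‖ ≤ ‖ζ - e‖ := norm_sub_norm_le _ _
    have : R ≤ |R| := le_abs_self R
    rw [dist_eq_norm]
    linarith [hζnorm]
  have hζ : ζ ∈ Eᶜ := by
    intro h
    linarith [hζE ζ h, dist_self ζ]
  have hKE : Metric.closedBall ζ (1/2) ⊆ Eᶜ := by
    intro z hz
    intro hzE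
    have := hζE z hzE
    rw [Metric.mem_closedBall, dist_comm] at hz
    linarith
  -- derivative is nonzero
  set a : ℂ := deriv f ζ with hadef
  have hane : a ≠ 0 := auxInj hΩ hf hinj hζ
  -- the auxiliary bounded function
  set g : ℂ → ℂ := dslope f ζ with hgdef
  have hgd : DifferentiableOn ℂ g Eᶜ :=
    (Complex.differentiableOn_dslope (hΩ.mem_nhds hζ)).mpr hf
  have hgζ : g ζ = a := dslope_same f ζ
  have hgval : ∀ z, z ≠ ζ → g z = (f z - f ζ) / (z - ζ) := by
    intro z hz
    rw [hgdef, dslope_of_ne f hz, slope_def_field]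
  have hgne : ∀ z ∈ Eᶜ, g z ≠ 0 := by
    intro z hz
    rcases eq_or_ne z ζ with h | h
    · rw [h, hgζ]; exact hane
    · rw [hgval z h]
      apply div_ne_zero
      · rw [sub_ne_zero]
        intro hfz
        exact h (hinj hz hζ hfz)
      · rwa [sub_ne_zero]
  set g₂ : ℂ → ℂ := dslope g ζ with hg₂def
  have hg₂d : DifferentiableOn ℂ g₂ Eᶜ :=
    (Complex.differentiableOn_dslope (hΩ.mem_nhds hζ)).mpr hgd
  set H : ℂ → ℂ := fun z => g₂ z / (a * g z) with hHdef
  have hHd : DifferentiableOn ℂ H Eᶜ := by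
    apply hg₂d.div ((differentiableOn_const a).mul hgd)
    intro z hz
    exact mul_ne_zero hane (hgne z hz)
  -- the key formula away from ζ
  have hHz : ∀ z ∈ Eᶜ, z ≠ ζ → H z = (a * (z - ζ))⁻¹ - (f z - f ζ)⁻¹ := by
    intro z hz hne
    have ht : z - ζ ≠ 0 := sub_ne_zero.mpr hne
    have hw : f z - f ζ ≠ 0 := by
      rw [sub_ne_zero]
      intro hfz
      exact hne (hinj hz hζ hfz)
    rw [hHdef]
    simp only
    rw [hg₂def, dslope_of_ne g hne, slope_def_field, hgζ, hgval z hne]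
    field_simp
  -- boundedness
  have hfa : AnalyticAt ℂ f ζ := (hf.analyticOnNhd hΩ) ζ hζ
  have hfs : HasStrictDerivAt f a ζ := auxStrict hfa
  have hmap : map f (𝓝 ζ) = 𝓝 (f ζ) := hfs.map_nhds_eq hane
  have hIm : f '' Metric.ball ζ (1/2) ∈ 𝓝 (f ζ) := by
    rw [← hmap]
    exact image_mem_map (Metric.ball_mem_nhds ζ (by norm_num))
  obtain ⟨r, hr, hrball⟩ := Metric.mem_nhds_iff.mp hIm
  have hfar : ∀ z ∈ Eᶜ, z ∉ Metric.ball ζ (1/2) → r ≤ ‖f z - f ζ‖ := by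
    intro z hz hzb
    by_contra h
    push_neg at h
    have : f z ∈ Metric.ball (f ζ) r := by
      rw [Metric.mem_ball, dist_eq_norm]; exact h
    obtain ⟨w, hw, hfw⟩ := hrball this
    have hwE : w ∈ Eᶜ := hKE (Metric.ball_subset_closedBall hw)
    have := hinj hz hwE hfw.symm
    rw [this] at hzb
    exact hzb hw
  obtain ⟨M₁, hM₁⟩ := (isCompact_closedBall ζ (1/2)).exists_bound_of_continuousOn
    (hHd.continuousOn.mono hKE)
  have hbound : ∀ z ∈ Eᶜ, ‖H z‖ ≤ max M₁ ((‖a‖ * (1/2))⁻¹ + r⁻¹) := by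
    intro z hz
    rcases em (z ∈ Metric.closedBall ζ (1/2)) with h | h
    · exact le_max_of_le_left (hM₁ z h)
    · have hzb : z ∉ Metric.ball ζ (1/2) := fun hb => h (Metric.ball_subset_closedBall hb)
      have hne : z ≠ ζ := by
        intro he; apply h; rw [he]; exact Metric.mem_closedBall_self (by norm_num)
      have hdist : (1:ℝ)/2 ≤ ‖z - ζ‖ := by
        rw [Metric.mem_closedBall, dist_eq_norm, not_le] at h
        linarith
      rw [hHz z hz hne]
      apply le_max_of_le_right
      apply (norm_sub_le _ _).trans
      have h1 : ‖(a * (z - ζ))⁻¹‖ ≤ (‖a‖ * (1/2))⁻¹ := by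
        have hapos : (0:ℝ) < ‖a‖ := norm_pos_iff.mpr hane
        rw [norm_inv, norm_mul]
        apply inv_anti₀ (by positivity)
        gcongr
      have h2 : ‖(f z - f ζ)⁻¹‖ ≤ r⁻¹ := by
        rw [norm_inv]
        exact inv_anti₀ hr (hfar z hz hzb)
      linarith
  -- H is constant
  have hconst := hrem H hHd ⟨_, hbound⟩
  -- H tends to 0 at infinity
  have hEc : Eᶜ ∈ cocompact ℂ := hE.compl_mem_cocompact
  have hKc : (Metric.closedBall ζ (1/2))ᶜ ∈ cocompact ℂ :=
    (isCompact_closedBall ζ (1/2)).compl_mem_cocompact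
  have hev : ∀ᶠ z in cocompact ℂ, H z = (a * (z - ζ))⁻¹ - (f z - f ζ)⁻¹ := by
    filter_upwards [hEc, hKc] with z hz hzK
    have hne : z ≠ ζ := by
      intro he; apply hzK; rw [he]; exact Metric.mem_closedBall_self (by norm_num)
    exact hHz z hz hne
  have hT1 : Tendsto (fun z : ℂ => (a * (z - ζ))⁻¹) (cocompact ℂ) (𝓝 0) := by
    apply tendsto_inv₀_cobounded.comp
    rw [Metric.cobounded_eq_cocompact]
    have he : Tendsto (fun z : ℂ => a * (z - ζ)) (cocompact ℂ) (cocompact ℂ) := by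
      have : (fun z : ℂ => a * (z - ζ)) =
          (Homeomorph.mulLeft₀ a hane) ∘ (Homeomorph.subRight ζ) := rfl
      rw [this]
      exact ((Homeomorph.subRight ζ).trans (Homeomorph.mulLeft₀ a hane)).map_cocompact.le
    exact he
  have hT2 : Tendsto (fun z : ℂ => (f z - f ζ)⁻¹) (cocompact ℂ) (𝓝 0) := by
    apply tendsto_inv₀_cobounded.comp
    rw [Metric.cobounded_eq_cocompact]
    exact Tendsto.comp (Homeomorph.subRight (f ζ)).map_cocompact.le hinfty
  have hT : Tendsto H (cocompact ℂ) (𝓝 0) := by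
    have := hT1.sub hT2
    rw [sub_zero] at this
    exact this.congr' (hev.mono fun z h => h.symm)
  have hTc : Tendsto H (cocompact ℂ) (𝓝 (H ζ)) := by
    apply tendsto_const_nhds.congr'
    filter_upwards [hEc] with z hz
    exact (hconst z hz ζ hζ).symm
  have hNC : NoncompactSpace ℂ := by infer_instance
  have hH0 : H ζ = 0 := tendsto_nhds_unique hTc hT
  -- conclude
  refine ⟨a, f ζ - a * ζ, hane, ?_⟩
  intro z hz
  rcases eq_or_ne z ζ with h | h
  · rw [h]; ring
  · have hz0 : H z = 0 := by rw [hconst z hz ζ hζ, hH0]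
    rw [hHz z hz h] at hz0
    have heq : (a * (z - ζ))⁻¹ = (f z - f ζ)⁻¹ := by
      rw [sub_eq_zero] at hz0; exact hz0
    have : a * (z - ζ) = f z - f ζ := inv_injective heq
    linear_combination -this
end

section
/- Let E ⊆ ℂ be a compact A-removable set. Then E is CH-removable: every homeomorphism of ℂ onto itself that is holomorphic on ℂ \ E is an affine map z ↦ a z + b with a ≠ 0. -/
open Filter

/-- A compact set `E ⊆ ℂ` is `CH`-removable if every homeomorphism of `ℂ` onto itself that
is holomorphic on `ℂ \ E` is an affine map `z ↦ a z + b` with `a ≠ 0`. -/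
def CHRemovable (E : Set ℂ) : Prop :=
  ∀ φ : ℂ ≃ₜ ℂ, DifferentiableOn ℂ (⇑φ) Eᶜ →
    ∃ a b : ℂ, a ≠ 0 ∧ ∀ z : ℂ, φ z = a * z + b

open Polynomial in

lemma not_injective_of_natDegree_ge_two (Q : Polynomial ℂ) (h2 : 2 ≤ Q.natDegree) :
    ¬ Function.Injective (fun z => Q.eval z) := by
  intro hinj
  set n := Q.natDegree with hn
  set P := Q - C (Q.eval 0) with hP
  have hPdeg : P.natDegree = n := natDegree_sub_C
  have hP0 : P ≠ 0 := by
    intro h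
    rw [h, natDegree_zero] at hPdeg
    omega
  have hsplits : Splits P := IsAlgClosed.splits P
  have hcard : Multiset.card P.roots = n := by
    rw [← hPdeg]; exact (splits_iff_card_roots).mp hsplits
  have hroots : ∀ r ∈ P.roots, r = 0 := by
    intro r hr
    have hr0 : P.eval r = 0 := (mem_roots hP0).mp hr
    have hev : Q.eval r = Q.eval 0 := by
      simpa [hP, sub_eq_zero] using hr0
    exact hinj hev
  have hrepl : P.roots = Multiset.replicate n 0 :=
    Multiset.eq_replicate.mpr ⟨hcard, hroots⟩
  have hfact : P = C P.leadingCoeff * (P.roots.map fun a => X - C a).prod :=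
    hsplits.eq_prod_roots
  rw [hrepl] at hfact
  simp only [Multiset.map_replicate, map_zero, sub_zero, Multiset.prod_replicate] at hfact
  -- P = C a * X ^ n
  have hnne : n ≠ 0 := by omega
  have hprim := Complex.isPrimitiveRoot_exp n hnne
  set ζ := Complex.exp (2 * Real.pi * Complex.I / n) with hζ
  have hζn : ζ ^ n = 1 := hprim.pow_eq_one
  have heval : Q.eval ζ = Q.eval 1 := by
    have e1 : P.eval ζ = P.eval 1 := by
      rw [hfact]; simp [hζn]
    have : ∀ z, Q.eval z = P.eval z + Q.eval 0 := by intro z; simp [hP]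
    rw [this ζ, this 1, e1]
  have : ζ = 1 := hinj heval
  have : (n : ℕ) ∣ 1 := hprim.dvd_of_pow_eq_one 1 (by simp [this])
  have := Nat.le_of_dvd one_pos this
  omega


lemma dslope_iter_taylor (k : ℂ → ℂ) (m : ℕ) :
    ∀ w : ℂ, w ≠ 0 →
      k w = (∑ j ∈ Finset.range m, ((fun u => dslope u 0)^[j] k) 0 * w ^ j)
        + w ^ m * ((fun u => dslope u 0)^[m] k) w := by
  induction m with
  | zero => intro w hw; simp
  | succ m ih =>
    intro w hw
    have step : ((fun u => dslope u 0)^[m] k) w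
        = ((fun u => dslope u 0)^[m] k) 0 + w * ((fun u => dslope u 0)^[m+1] k) w := by
      rw [Function.iterate_succ_apply']
      rw [dslope_of_ne _ hw, slope_def_field]
      field_simp
      ring
    rw [ih w hw, Finset.sum_range_succ, step]
    ring

lemma dslope_iter_differentiableOn {k : ℂ → ℂ} {ρ : ℝ} (hρ : 0 < ρ)
    (hk : DifferentiableOn ℂ k (Metric.ball 0 ρ)) (m : ℕ) :
    DifferentiableOn ℂ ((fun u => dslope u 0)^[m] k) (Metric.ball 0 ρ) := by
  induction m with
  | zero => exact hk
  | succ m ih =>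
    rw [Function.iterate_succ_apply']
    exact (Complex.differentiableOn_dslope (Metric.ball_mem_nhds _ hρ)).mpr ih

/-- Every compact `A`-removable set is `CH`-removable. -/
theorem stmt_15 (E : Set ℂ) (hE : IsCompact E) (hrem : ARemovable E) :
    CHRemovable E := by
  intro φ hφ
  have hEc : IsOpen Eᶜ := hE.isClosed.isOpen_compl
  obtain ⟨r, hr⟩ := hE.isBounded.subset_closedBall 0
  set R : ℝ := max r ‖φ.symm 0‖ + 1 with hRdef
  have hR0 : 0 < R := by positivity
  have hER : E ⊆ Metric.ball 0 R := by
    refine hr.trans (Metric.closedBall_subset_ball ?_)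
    have : r ≤ max r ‖φ.symm 0‖ := le_max_left _ _
    linarith
  have hkey : ∀ z : ℂ, R ≤ ‖z‖ → z ∈ Eᶜ ∧ φ z ≠ 0 := by
    intro z hz
    constructor
    · intro hzE
      have := hER hzE
      rw [mem_ball_zero_iff] at this
      linarith
    · intro h0
      have hz0 : z = φ.symm 0 := by
        have := congrArg φ.symm h0
        rwa [φ.symm_apply_apply] at this
      have : ‖φ.symm 0‖ ≤ max r ‖φ.symm 0‖ := le_max_right _ _
      rw [hz0] at hz
      linarith
  have htendφ : Tendsto φ (cocompact ℂ) (cocompact ℂ) := φ.map_cocompact.le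
  have htendφ' : Tendsto φ (Bornology.cobounded ℂ) (Bornology.cobounded ℂ) := by
    rw [Metric.cobounded_eq_cocompact]; exact htendφ
  set g : ℂ → ℂ := fun w => if w = 0 then 0 else (φ w⁻¹)⁻¹ with hgdef
  set ε : ℝ := R⁻¹ with hεdef
  have hε : 0 < ε := inv_pos.mpr hR0
  have hwball : ∀ w : ℂ, w ≠ 0 → w ∈ Metric.ball (0:ℂ) ε → R ≤ ‖w⁻¹‖ := by
    intro w hw0 hwb
    rw [mem_ball_zero_iff] at hwb
    rw [norm_inv]
    calc R = (R⁻¹)⁻¹ := (inv_inv R).symm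
    _ ≤ ‖w‖⁻¹ := by
        apply inv_anti₀ (norm_pos_iff.mpr hw0) hwb.le
  have hgval : ∀ w : ℂ, w ≠ 0 → g w = (φ w⁻¹)⁻¹ := fun w hw => if_neg hw
  have hgdiff : DifferentiableOn ℂ g (Metric.ball 0 ε \ {0}) := by
    rintro w ⟨hwb, hw0'⟩
    have hw0 : w ≠ 0 := hw0'
    have hR' := hwball w hw0 hwb
    have h1 : DifferentiableAt ℂ (fun w : ℂ => (φ w⁻¹)⁻¹) w := by
      have hdφ : DifferentiableAt ℂ φ w⁻¹ := hφ.differentiableAt (hEc.mem_nhds (hkey _ hR').1)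
      have hdinv : DifferentiableAt ℂ (fun w : ℂ => w⁻¹) w := differentiableAt_inv hw0
      exact (hdφ.comp w hdinv).inv (hkey _ hR').2
    have heq : (fun w : ℂ => (φ w⁻¹)⁻¹) =ᶠ[nhds w] g := by
      filter_upwards [isOpen_compl_singleton.mem_nhds hw0'] with x hx
      exact (hgval x hx).symm
    exact (h1.congr_of_eventuallyEq heq.symm).differentiableWithinAt
  have hgcont : ContinuousAt g 0 := by
    have h2 : Tendsto g (nhdsWithin (0:ℂ) {0}ᶜ) (nhds 0) := by
      have t1 : Tendsto (fun w : ℂ => w⁻¹) (nhdsWithin (0:ℂ) {0}ᶜ) (Bornology.cobounded ℂ) :=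
        tendsto_inv₀_nhdsNE_zero
      have t3 : Tendsto (fun z : ℂ => z⁻¹) (Bornology.cobounded ℂ) (nhds 0) :=
        tendsto_inv₀_cobounded
      have := t3.comp (htendφ'.comp t1)
      refine this.congr' ?_
      filter_upwards [self_mem_nhdsWithin] with w hw
      exact (hgval w hw).symm
    have hg0 : g 0 = 0 := if_pos rfl
    have h3 : Tendsto g (nhdsWithin (0:ℂ) {0}ᶜ ⊔ pure 0) (nhds 0) :=
      h2.sup (by simpa [hg0] using tendsto_pure_nhds g 0)
    rw [nhdsNE_sup_pure] at h3
    rw [ContinuousAt, hg0]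
    exact h3
  have hgball : DifferentiableOn ℂ g (Metric.ball 0 ε) :=
    (Complex.differentiableOn_compl_singleton_and_continuousAt_iff
      (Metric.ball_mem_nhds _ hε)).mp ⟨hgdiff, hgcont⟩
  have hga : AnalyticAt ℂ g 0 := hgball.analyticAt (Metric.ball_mem_nhds _ hε)
  have hne : ∀ᶠ w in nhdsWithin (0:ℂ) {0}ᶜ, g w ≠ 0 := by
    have hball : Metric.ball (0:ℂ) ε ∈ nhdsWithin (0:ℂ) {0}ᶜ :=
      nhdsWithin_le_nhds (Metric.ball_mem_nhds _ hε)
    filter_upwards [hball, self_mem_nhdsWithin] with w hwb hw0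
    rw [hgval w hw0]
    exact inv_ne_zero (hkey _ (hwball w hw0 hwb)).2
  have hnotev : ¬ (∀ᶠ w in nhds (0:ℂ), g w = 0) := by
    intro hev
    have := (hev.filter_mono nhdsWithin_le_nhds).and hne
    rcases this.exists with ⟨w, hw1, hw2⟩
    exact hw2 hw1
  have horder : analyticOrderAt g 0 ≠ ⊤ := fun h => hnotev (analyticOrderAt_eq_top.mp h)
  obtain ⟨n, hn⟩ := ENat.ne_top_iff_exists.mp horder
  obtain ⟨h, hha, hh0, hev⟩ := (hga.analyticOrderAt_eq_natCast (n := n)).mp hn.symm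
  have hev' : ∀ᶠ w in nhds (0:ℂ), g w = w ^ n * h w := by
    filter_upwards [hev] with w hw
    simpa [sub_zero, smul_eq_mul] using hw
  have hg0 : g 0 = 0 := if_pos rfl
  have hn0 : n ≠ 0 := by
    intro h0
    have := hev'.self_of_nhds
    rw [h0, hg0] at this
    simp at this
    exact hh0 this.symm
  set k : ℂ → ℂ := fun w => (h w)⁻¹ with hkdef
  have hka : AnalyticAt ℂ k 0 := hha.inv hh0
  obtain ⟨ρ, hρ0, hρ⟩ := Metric.eventually_nhds_iff_ball.mp hka.eventually_analyticAt
  have hkd : DifferentiableOn ℂ k (Metric.ball 0 ρ) :=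
    fun y hy => ((hρ y hy).differentiableAt).differentiableWithinAt
  obtain ⟨δ, hδ0, hδ⟩ := Metric.eventually_nhds_iff_ball.mp hev'
  set D : ℕ → ℂ → ℂ := fun m => ((fun u => dslope u 0)^[m] k) with hDdef
  set c : ℕ → ℂ := fun j => D j 0 with hcdef
  set R' : ℝ := max R δ⁻¹ + 1 with hR'def
  have hR'0 : 0 < R' := by positivity
  have hasymp : ∀ z : ℂ, R' ≤ ‖z‖ → φ z = z ^ n * k z⁻¹ := by
    intro z hz
    rw [hR'def] at hz
    have hmaxR : R ≤ max R δ⁻¹ := le_max_left _ _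
    have hmaxδ : δ⁻¹ ≤ max R δ⁻¹ := le_max_right _ _
    have hz0 : z ≠ 0 := by
      intro h0; rw [h0, norm_zero] at hz; linarith
    have hzR : R ≤ ‖z‖ := by linarith
    have hφz : φ z ≠ 0 := (hkey z hzR).2
    have hzinv : ‖z⁻¹‖ < δ := by
      rw [norm_inv]
      have h4 : δ⁻¹ < ‖z‖ := by linarith
      have h5 : ‖z‖⁻¹ < (δ⁻¹)⁻¹ := inv_strictAnti₀ (inv_pos.mpr hδ0) h4
      rwa [inv_inv] at h5
    have hgz : g z⁻¹ = (φ z)⁻¹ := by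
      rw [hgval z⁻¹ (inv_ne_zero hz0), inv_inv]
    have hfac : g z⁻¹ = (z⁻¹) ^ n * h z⁻¹ := by
      apply hδ
      rwa [mem_ball_zero_iff]
    have : (φ z)⁻¹ = (z⁻¹) ^ n * h z⁻¹ := hgz ▸ hfac
    have := congrArg (·⁻¹) this
    simpa [mul_inv, inv_pow, inv_inv, hkdef, mul_comm] using this
  set f : ℂ → ℂ := fun z => φ z - ∑ j ∈ Finset.range n, c j * z ^ (n - j) with hfdef
  have hfc : Continuous f := by
    apply φ.continuous.sub
    exact continuous_finset_sum _ fun j _ => (continuous_const.mul (continuous_pow _))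
  have hfd : DifferentiableOn ℂ f Eᶜ := by
    apply hφ.sub
    apply Differentiable.differentiableOn
    exact Differentiable.fun_sum fun j _ => (differentiable_const _).mul (differentiable_pow _)
  have hflim : Tendsto f (cocompact ℂ) (nhds (D n 0)) := by
    have hDn : ContinuousAt (D n) 0 :=
      ((dslope_iter_differentiableOn hρ0 hkd n).differentiableAt
        (Metric.ball_mem_nhds _ hρ0)).continuousAt
    have hinv0 : Tendsto (fun z : ℂ => z⁻¹) (cocompact ℂ) (nhds 0) := by
      rw [← Metric.cobounded_eq_cocompact]; exact tendsto_inv₀_cobounded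
    have h1 : Tendsto (fun z : ℂ => D n z⁻¹) (cocompact ℂ) (nhds (D n 0)) :=
      hDn.tendsto.comp hinv0
    refine h1.congr' ?_
    have hbig : ∀ᶠ z : ℂ in cocompact ℂ, R' ≤ ‖z‖ := by
      rw [← Metric.cobounded_eq_cocompact]
      exact eventually_cobounded_le_norm R'
    filter_upwards [hbig] with z hz
    have hz0 : z ≠ 0 := by
      intro h0; rw [h0, norm_zero] at hz; linarith
    have htay := dslope_iter_taylor k n z⁻¹ (inv_ne_zero hz0)
    have hpow : ∀ j ∈ Finset.range n, z ^ n * (c j * (z⁻¹) ^ j) = c j * z ^ (n - j) := by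
      intro j hj
      have hjn : j ≤ n := (Finset.mem_range.mp hj).le
      have : z ^ (n - j) * z ^ j = z ^ n := pow_sub_mul_pow z hjn
      rw [inv_pow, ← this]
      field_simp
    have hpn : z ^ n * ((z⁻¹) ^ n * D n z⁻¹) = D n z⁻¹ := by
      rw [inv_pow, ← mul_assoc, mul_inv_cancel₀ (pow_ne_zero _ hz0), one_mul]
    calc D n z⁻¹ = z ^ n * k z⁻¹ - ∑ j ∈ Finset.range n, c j * z ^ (n - j) := by
          rw [htay, mul_add, Finset.mul_sum, Finset.sum_congr rfl hpow, hpn]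
          ring
    _ = f z := by rw [hfdef]; simp only [hasymp z hz]
  have hconst := hrem f hfc hfd ⟨D n 0, hflim⟩
  set b : ℂ := f 0 with hbdef
  have hφeq : ∀ z, φ z = (∑ j ∈ Finset.range n, c j * z ^ (n - j)) + b := by
    intro z
    have := hconst z 0
    rw [hfdef] at this
    simp only at this
    rw [hbdef, hfdef]
    simp only
    linear_combination this
  have hc0 : c 0 ≠ 0 := by
    have : c 0 = (h 0)⁻¹ := by simp [hcdef, hDdef, hkdef]
    rw [this]
    exact inv_ne_zero hh0
  set Q : Polynomial ℂ :=
    (∑ j ∈ Finset.range n, Polynomial.C (c j) * Polynomial.X ^ (n - j)) + Polynomial.C b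
    with hQdef
  have hQeval : ∀ z, Q.eval z = φ z := by
    intro z
    rw [hφeq z, hQdef]
    simp [Polynomial.eval_finset_sum]
  have hQcoeff : Q.coeff n = c 0 := by
    rw [hQdef]
    rw [Polynomial.coeff_add, Polynomial.finset_sum_coeff]
    rw [Polynomial.coeff_C, if_neg hn0]
    rw [Finset.sum_eq_single 0]
    · simp [Polynomial.coeff_C_mul, Polynomial.coeff_X_pow]
    · intro j hj hj0
      have hjn : j < n := Finset.mem_range.mp hj
      have : n - j ≠ n := by omega
      simp [Polynomial.coeff_C_mul, Polynomial.coeff_X_pow, this, Ne.symm this]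
    · intro h0
      exact absurd (Finset.mem_range.mpr (Nat.pos_of_ne_zero hn0)) h0
  have hQdeg_le : Q.natDegree ≤ n := by
    rw [hQdef]
    apply le_trans (Polynomial.natDegree_add_le _ _)
    apply max_le
    · apply Polynomial.natDegree_sum_le_of_forall_le
      intro j hj
      apply le_trans (Polynomial.natDegree_C_mul_le _ _)
      rw [Polynomial.natDegree_X_pow]
      omega
    · simp
  have hQdeg : Q.natDegree = n :=
    le_antisymm hQdeg_le (Polynomial.le_natDegree_of_ne_zero (hQcoeff ▸ hc0))
  have hinj : Function.Injective (fun z => Q.eval z) := by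
    have : (fun z => Q.eval z) = ⇑φ := funext hQeval
    rw [this]
    exact φ.injective
  have hn1 : n = 1 := by
    by_contra hne1
    have h2 : 2 ≤ Q.natDegree := by omega
    exact not_injective_of_natDegree_ge_two Q h2 hinj
  refine ⟨c 0, b, hc0, fun z => ?_⟩
  rw [hφeq z, hn1]
  simp
end
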